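/- Let Q be a symmetric positive definite n×n matrix, D a symmetric positive definite m×m matrix, and B an m×n matrix. Then the doubly augmented matrix [[Q + 2 B^T D^{-1} B, B^T], [B, D]] is symmetric positive definite. -/

import Mathlib

open Matrix

/-- The doubly augmented KKT matrix is symmetric positive definite. -/
theorem doubly_augmented_posDef {n m : ℕ}
    (Q : Matrix (Fin n) (Fin n) ℝ) (D : Matrix (Fin m) (Fin m) ℝ)
    (B : Matrix (Fin m) (Fin n) ℝ) (hQ : Q.PosDef) (hD : D.PosDef) :
    (Matrix.fromBlocks (Q + (2 : ℝ) • (Bᵀ * D⁻¹ * B)) Bᵀ B D).PosDef := by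
  haveI : Invertible D := hD.isUnit.invertible
  have hBt : (Bᵀ)ᴴ = B := by
    rw [conjTranspose_eq_transpose_of_trivial, transpose_transpose]
  set A := Q + (2 : ℝ) • (Bᵀ * D⁻¹ * B) with hA
  have hBDB : (Bᵀ * D⁻¹ * B).PosSemidef := by
    have := hD.inv.posSemidef.conjTranspose_mul_mul_same B
    rwa [conjTranspose_eq_transpose_of_trivial] at this
  have hSchur : (A - Bᵀ * D⁻¹ * (Bᵀ)ᴴ).PosDef := by
    rw [hBt]
    have h : A - Bᵀ * D⁻¹ * B = Q + Bᵀ * D⁻¹ * B := by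
      rw [hA, two_smul]; abel
    rw [h]
    exact hQ.add_posSemidef hBDB
  have key : (fromBlocks A Bᵀ (Bᵀ)ᴴ D).PosDef := by
    refine PosDef.of_dotProduct_mulVec_pos ((IsHermitian.fromBlocks₂₂ A Bᵀ hD.1).mpr hSchur.1) fun z hz => ?_
    rw [dotProduct_mulVec, ← Sum.elim_comp_inl_inr z,
      schur_complement_eq₂₂ A Bᵀ (z ∘ Sum.inl) (z ∘ Sum.inr) hD.1]
    rcases eq_or_ne (z ∘ Sum.inl) 0 with hx | hx
    · have hy : z ∘ Sum.inr ≠ 0 := by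
        intro hy
        apply hz
        funext i
        cases i with
        | inl i => exact congrFun hx i
        | inr i => exact congrFun hy i
      have h1 : star (z ∘ Sum.inl) ᵥ* (A - Bᵀ * D⁻¹ * (Bᵀ)ᴴ) ⬝ᵥ (z ∘ Sum.inl) = 0 := by
        simp [hx]
      have h2 : (D⁻¹ * (Bᵀ)ᴴ) *ᵥ (z ∘ Sum.inl) + (z ∘ Sum.inr) = z ∘ Sum.inr := by
        simp [hx]
      rw [h1, h2, add_zero, ← dotProduct_mulVec]
      exact hD.dotProduct_mulVec_pos hy
    · have h1 : 0 < star (z ∘ Sum.inl) ᵥ* (A - Bᵀ * D⁻¹ * (Bᵀ)ᴴ) ⬝ᵥ (z ∘ Sum.inl) := by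
        rw [← dotProduct_mulVec]
        exact hSchur.dotProduct_mulVec_pos hx
      have h2 : 0 ≤ star ((D⁻¹ * (Bᵀ)ᴴ) *ᵥ (z ∘ Sum.inl) + (z ∘ Sum.inr)) ᵥ* D ⬝ᵥ
          ((D⁻¹ * (Bᵀ)ᴴ) *ᵥ (z ∘ Sum.inl) + (z ∘ Sum.inr)) := by
        rw [← dotProduct_mulVec]
        exact hD.posSemidef.dotProduct_mulVec_nonneg _
      linarith
  rw [hBt] at key
  exact key
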